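/- (Comparability of stopping data across CZ intervals) With 𝒥 a finite collection of dyadic intervals, K ≥ 1, and CZ_K(𝒥) as above, for any h ∈ L^∞ with compact support: sup_{J∈𝒥} inf_J M h ≲ sup_{G∈CZ_K(𝒥)} inf_G M h ≲ K²·sup_{J∈𝒥} inf_J M h, where M is the Hardy–Littlewood maximal function and the implicit constants are absolute. -/

import Mathlib

/-- A dyadic interval `[2^k n, 2^k (n+1))` in the standard dyadic grid on `ℝ`. -/
structure DyadicInterval where
  k : ℤ
  n : ℤ
deriving DecidableEq

namespace DyadicInterval

noncomputable def len (I : DyadicInterval) : ℝ := (2 : ℝ) ^ I.k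
noncomputable def left (I : DyadicInterval) : ℝ := (2 : ℝ) ^ I.k * I.n
noncomputable def set (I : DyadicInterval) : Set ℝ := Set.Ico I.left (I.left + I.len)
/-- The `κ`-th dyadic parent. -/
def parent (κ : ℕ) (I : DyadicInterval) : DyadicInterval := ⟨I.k + κ, Int.fdiv I.n (2 ^ κ)⟩

end DyadicInterval
namespace DyadicInterval
noncomputable def center (I : DyadicInterval) : ℝ := I.left + I.len / 2
/-- The `λ`-dilate `λI` of an interval (same center, `λ` times the length). -/
noncomputable def dilate (I : DyadicInterval) (lam : ℝ) : Set ℝ :=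
  Set.Ioo (I.center - lam * I.len / 2) (I.center + lam * I.len / 2)
end DyadicInterval

/-- `G` is admissible for the Whitney-type collection: `9K²G` contains no `J ∈ 𝒥`. -/
def czProp (K : ℝ) (𝒥 : Finset DyadicInterval) (G : DyadicInterval) : Prop :=
  ∀ J ∈ 𝒥, ¬ J.set ⊆ G.dilate (9 * K ^ 2)

/-- The Calderón–Zygmund collection `CZ_K(𝒥)`: maximal admissible dyadic intervals. -/
def CZ (K : ℝ) (𝒥 : Finset DyadicInterval) : Set DyadicInterval :=
  {G | czProp K 𝒥 G ∧ ∀ G' : DyadicInterval, czProp K 𝒥 G' → G.set ⊆ G'.set → G' = G}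

open MeasureTheory ENNReal

/-- The Hardy–Littlewood maximal function (over intervals centered at `x`). -/
noncomputable def hlMax (f : ℝ → ℂ) (x : ℝ) : ℝ≥0∞ :=
  ⨆ (r : ℝ) (_ : 0 < r),
    (ENNReal.ofReal (2 * r))⁻¹ * ∫⁻ y in Set.Ioo (x - r) (x + r), (‖f y‖₊ : ℝ≥0∞)

/-- Bounded, compactly supported, measurable functions. -/
def Nice (f : ℝ → ℂ) : Prop :=
  Measurable f ∧ (∃ B, ∀ x, ‖f x‖ ≤ B) ∧ ∃ R, ∀ x, R < |x| → f x = 0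

namespace DyadicInterval

lemma len_pos (I : DyadicInterval) : 0 < I.len := zpow_pos (by norm_num) _

lemma set_nonempty (I : DyadicInterval) : I.set.Nonempty :=
  ⟨I.left, le_refl _, by linarith [I.len_pos]⟩

lemma volume_set (I : DyadicInterval) : MeasureTheory.volume I.set = ENNReal.ofReal I.len := by
  simp [set, Real.volume_Ico]

lemma set_subset_iff {I I' : DyadicInterval} :
    I.set ⊆ I'.set ↔ I'.left ≤ I.left ∧ I.left + I.len ≤ I'.left + I'.len :=
  Set.Ico_subset_Ico_iff (by linarith [I.len_pos])

lemma len_le_of_subset {I I' : DyadicInterval} (h : I.set ⊆ I'.set) : I.len ≤ I'.len := by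
  have := MeasureTheory.measure_mono (μ := MeasureTheory.volume) h
  rw [volume_set, volume_set, ENNReal.ofReal_le_ofReal_iff (le_of_lt I'.len_pos)] at this
  exact this

lemma k_le_of_subset {I I' : DyadicInterval} (h : I.set ⊆ I'.set) : I.k ≤ I'.k := by
  have := len_le_of_subset h
  rwa [len, len, zpow_le_zpow_iff_right₀ (by norm_num : (1:ℝ) < 2)] at this

lemma eq_of_subset_of_k_eq {I I' : DyadicInterval} (h : I.set ⊆ I'.set) (hk : I.k = I'.k) :
    I' = I := by
  obtain ⟨h1, h2⟩ := set_subset_iff.mp h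
  have hlen : I.len = I'.len := by rw [len, len, hk]
  have hleft : I.left = I'.left := le_antisymm (by linarith) h1
  have hn : I'.n = I.n := by
    have : ((2:ℝ) ^ I.k) * I.n = ((2:ℝ) ^ I.k) * I'.n := by
      rw [left, left] at hleft; rw [hleft, hk]
    have := mul_left_cancel₀ (ne_of_gt (zpow_pos (by norm_num : (0:ℝ) < 2) I.k)) this
    exact_mod_cast this.symm
  cases I; cases I'; simp_all

/-- key arithmetic: scale comparison of dyadic intervals that intersect -/
lemma subset_of_inter_nonempty {I I' : DyadicInterval} (hx : (I.set ∩ I'.set).Nonempty)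
    (hk : I.k ≤ I'.k) : I.set ⊆ I'.set := by
  obtain ⟨x, ⟨hx1, hx2⟩, ⟨hx3, hx4⟩⟩ := hx
  set d : ℕ := (I'.k - I.k).toNat with hd
  have hdk : I'.k = I.k + d := by simp [hd]; omega
  have h2k : (0:ℝ) < (2:ℝ) ^ I.k := zpow_pos (by norm_num) _
  have hsplit : (2:ℝ) ^ I'.k = (2:ℝ) ^ I.k * ((2:ℕ) ^ d : ℤ) := by
    push_cast
    rw [hdk, zpow_add₀ (by norm_num : (2:ℝ) ≠ 0)]
    norm_num
  -- from the common point, integer inequalities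
  have key1 : ((2:ℕ) ^ d : ℤ) * I'.n ≤ I.n := by
    have : (2:ℝ) ^ I'.k * I'.n < (2:ℝ) ^ I.k * (I.n + 1) := by
      calc (2:ℝ) ^ I'.k * I'.n ≤ x := hx3
        _ < I.left + I.len := hx2
        _ = (2:ℝ) ^ I.k * (I.n + 1) := by rw [left, len]; ring
    rw [hsplit, mul_assoc] at this
    have h2 := (mul_lt_mul_iff_right₀ h2k).mp this
    have h3 : ((2:ℕ) ^ d : ℤ) * I'.n < I.n + 1 := by exact_mod_cast h2
    omega
  have key2 : I.n + 1 ≤ ((2:ℕ) ^ d : ℤ) * (I'.n + 1) := by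
    have : (2:ℝ) ^ I.k * I.n < (2:ℝ) ^ I'.k * (I'.n + 1) := by
      calc (2:ℝ) ^ I.k * I.n ≤ x := hx1
        _ < I'.left + I'.len := hx4
        _ = (2:ℝ) ^ I'.k * (I'.n + 1) := by rw [left, len]; ring
    rw [hsplit, mul_assoc] at this
    have h2 := (mul_lt_mul_iff_right₀ h2k).mp this
    have h3 : I.n < ((2:ℕ) ^ d : ℤ) * (I'.n + 1) := by exact_mod_cast h2
    omega
  -- conclude subset
  rw [set_subset_iff]
  constructor
  · rw [left, left, hsplit, mul_assoc]
    have : (((2:ℕ) ^ d : ℤ) * I'.n : ℝ) ≤ (I.n : ℝ) := by exact_mod_cast key1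
    nlinarith
  · rw [left, left, len, len]
    have e1 : (2:ℝ) ^ I.k * I.n + (2:ℝ)^I.k = (2:ℝ)^I.k * (I.n + 1) := by ring
    have e2 : (2:ℝ) ^ I'.k * I'.n + (2:ℝ)^I'.k = (2:ℝ)^I'.k * (I'.n + 1) := by ring
    rw [e1, e2, hsplit, mul_assoc]
    have : ((I.n : ℤ) + 1 : ℝ) ≤ ((((2:ℕ) ^ d : ℤ)) * (I'.n + 1) : ℝ) := by exact_mod_cast key2
    push_cast at this ⊢
    nlinarith

lemma parent_one_k (I : DyadicInterval) : (parent 1 I).k = I.k + 1 := by simp [parent]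

lemma parent_one_len (I : DyadicInterval) : (parent 1 I).len = 2 * I.len := by
  rw [len, len, parent_one_k, zpow_add_one₀ (by norm_num : (2:ℝ) ≠ 0)]; ring

lemma subset_parent_one (I : DyadicInterval) : I.set ⊆ (parent 1 I).set := by
  have hfd : 2 * (I.n.fdiv 2) ≤ I.n ∧ I.n ≤ 2 * (I.n.fdiv 2) + 1 := by
    rw [Int.fdiv_eq_ediv_of_nonneg _ (by norm_num)]
    omega
  rw [set_subset_iff, parent_one_len]
  have hP : (parent 1 I).left = (2:ℝ) ^ I.k * (2 * (I.n.fdiv 2)) := by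
    rw [left, parent]
    simp only
    rw [show I.k + ((1:ℕ):ℤ) = I.k + 1 by norm_num,
      zpow_add_one₀ (by norm_num : (2:ℝ) ≠ 0)]
    push_cast
    ring
  have h2k : (0:ℝ) < (2:ℝ) ^ I.k := zpow_pos (by norm_num) _
  have c1 : ((2 * (I.n.fdiv 2) : ℤ) : ℝ) ≤ (I.n : ℝ) := by exact_mod_cast hfd.1
  have c2 : ((I.n : ℤ) : ℝ) ≤ ((2 * (I.n.fdiv 2) + 1 : ℤ) : ℝ) := by exact_mod_cast hfd.2
  push_cast at c1 c2
  constructor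
  · rw [hP, left]; nlinarith
  · rw [hP, left, len]; nlinarith

lemma parent_one_ne (I : DyadicInterval) : parent 1 I ≠ I := by
  intro h
  have : (parent 1 I).k = I.k := by rw [h]
  rw [parent_one_k] at this; omega

/-- dyadic dichotomy: a strictly larger dyadic interval contains the parent -/
lemma parent_subset_of_subset {I I' : DyadicInterval} (h : I.set ⊆ I'.set) :
    I' = I ∨ (parent 1 I).set ⊆ I'.set := by
  have hk := k_le_of_subset h
  rcases eq_or_lt_of_le hk with hkeq | hklt
  · exact Or.inl (eq_of_subset_of_k_eq h hkeq)
  · right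
    apply subset_of_inter_nonempty
    · obtain ⟨x, hx⟩ := I.set_nonempty
      exact ⟨x, I.subset_parent_one hx, h hx⟩
    · rw [parent_one_k]; omega

lemma dilate_mono {I I' : DyadicInterval} {lam : ℝ} (h : I.set ⊆ I'.set) (hlam : 1 ≤ lam) :
    I.dilate lam ⊆ I'.dilate lam := by
  obtain ⟨h1, h2⟩ := set_subset_iff.mp h
  have h3 := len_le_of_subset h
  have h4 := I.len_pos
  apply Set.Ioo_subset_Ioo <;> · rw [center, center]; nlinarith

end DyadicInterval

namespace DyadicInterval

lemma czProp_anti {K : ℝ} (hK : 1 ≤ K) {𝒥 : Finset DyadicInterval} {I I' : DyadicInterval}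
    (h : czProp K 𝒥 I') (hsub : I.set ⊆ I'.set) : czProp K 𝒥 I := by
  intro J hJ hJsub
  exact h J hJ (hJsub.trans (dilate_mono hsub (by nlinarith)))

lemma not_czProp_self {K : ℝ} (hK : 1 ≤ K) {𝒥 : Finset DyadicInterval} {J : DyadicInterval}
    (hJ : J ∈ 𝒥) : ¬ czProp K 𝒥 J := by
  intro h
  apply h J hJ
  intro x ⟨hx1, hx2⟩
  have hl := J.len_pos
  have : (1:ℝ) ≤ K^2 := by nlinarith
  constructor
  · rw [center]; nlinarith
  · rw [center]; nlinarith

lemma volume_dilate (I : DyadicInterval) {lam : ℝ} (hlam : 0 ≤ lam) :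
    MeasureTheory.volume (I.dilate lam) = ENNReal.ofReal (lam * I.len) := by
  rw [dilate, Real.volume_Ioo]
  congr 1; ring

lemma iterate_parent_pow : ∀ (j : ℕ) (k n : ℤ),
    (parent 1)^[j] ⟨k, n * 2 ^ j⟩ = ⟨k + j, n⟩ := by
  intro j
  induction j with
  | zero => intro k n; simp
  | succ j ih =>
    intro k n
    rw [Function.iterate_succ_apply]
    have h2 : (n * 2 ^ (j+1) : ℤ).fdiv 2 = n * 2 ^ j := by
      rw [show (n * 2 ^ (j+1) : ℤ) = (n * 2 ^ j) * 2 by ring]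
      exact Int.mul_fdiv_cancel _ two_ne_zero
    have h1 : parent 1 ⟨k, n * 2 ^ (j+1)⟩ = ⟨k + 1, n * 2 ^ j⟩ := by
      simp only [parent, pow_one, h2, Nat.cast_one]
    rw [h1, ih]
    congr 1
    push_cast; ring

lemma exists_cz_subset {K : ℝ} (hK : 1 ≤ K) {𝒥 : Finset DyadicInterval} (h𝒥 : 𝒥.Nonempty)
    {J : DyadicInterval} (hJ : J ∈ 𝒥) : ∃ G ∈ CZ K 𝒥, G.set ⊆ J.set := by
  classical
  have hK2 : (0:ℝ) < 9 * K ^ 2 := by nlinarith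
  set kmin : ℤ := 𝒥.inf' h𝒥 (·.k) with hkmin
  obtain ⟨m, hm⟩ := exists_pow_lt_of_lt_one
    (x := (2:ℝ) ^ kmin / (9 * K ^ 2)) (by positivity) (by norm_num : (1/2 : ℝ) < 1)
  set k₀ : ℤ := min J.k (-(m:ℤ)) with hk₀
  have hsmall : (2:ℝ) ^ k₀ * (9 * K ^ 2) < (2:ℝ) ^ kmin := by
    have h1 : (2:ℝ) ^ k₀ ≤ (2:ℝ) ^ (-(m:ℤ)) :=
      zpow_le_zpow_right₀ (by norm_num) (min_le_right _ _)
    have h2 : (2:ℝ) ^ (-(m:ℤ)) = (1/2 : ℝ) ^ m := by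
      rw [zpow_neg, ← zpow_natCast]
      simp [zpow_natCast]
    have h3 : (2:ℝ) ^ k₀ < (2:ℝ) ^ kmin / (9 * K ^ 2) := by
      calc (2:ℝ) ^ k₀ ≤ (1/2:ℝ)^m := by rw [← h2]; exact h1
        _ < _ := hm
    calc (2:ℝ) ^ k₀ * (9*K^2) < ((2:ℝ) ^ kmin / (9 * K ^ 2)) * (9*K^2) := by
          exact mul_lt_mul_of_pos_right h3 hK2
      _ = (2:ℝ) ^ kmin := by field_simp
  have hadm : ∀ I : DyadicInterval, I.k = k₀ → czProp K 𝒥 I := by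
    intro I hIk J' hJ' hsub
    have hvol := MeasureTheory.measure_mono (μ := MeasureTheory.volume) hsub
    rw [volume_set, volume_dilate I (le_of_lt hK2)] at hvol
    have hle : J'.len ≤ 9 * K ^ 2 * I.len :=
      (ENNReal.ofReal_le_ofReal_iff (mul_nonneg hK2.le I.len_pos.le)).mp hvol
    have hmin : (2:ℝ) ^ kmin ≤ (2:ℝ) ^ J'.k :=
      zpow_le_zpow_right₀ (by norm_num) (Finset.inf'_le _ hJ')
    simp only [len, hIk] at hle
    nlinarith
  have hk₀J : k₀ ≤ J.k := min_le_left _ _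
  set d : ℕ := (J.k - k₀).toNat with hdd
  have hkd : k₀ + (d:ℤ) = J.k := by omega
  set G₀ : DyadicInterval := ⟨k₀, J.n * 2 ^ d⟩ with hG₀
  set A : ℕ → DyadicInterval := fun m => (parent 1)^[m] G₀ with hA
  have hAd : A d = J := by
    rw [hA]; simp only
    rw [hG₀, iterate_parent_pow d k₀ J.n, hkd]
  have hAsucc : ∀ m, A (m+1) = parent 1 (A m) := by
    intro m; rw [hA]; simp [Function.iterate_succ_apply']
  have hAmono : ∀ i j, i ≤ j → (A i).set ⊆ (A j).set := by
    have : Monotone (fun m => (A m).set) :=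
      monotone_nat_of_le_succ (fun m => by rw [hAsucc]; exact subset_parent_one _)
    exact fun i j hij => this hij
  have hA0 : czProp K 𝒥 (A 0) := hadm _ rfl
  have hAdbad : ¬ czProp K 𝒥 (A d) := by rw [hAd]; exact not_czProp_self hK hJ
  have hex : ∃ m, ¬ czProp K 𝒥 (A m) := ⟨d, hAdbad⟩
  set m₀ := Nat.find hex with hm₀
  have hm₀d : m₀ ≤ d := Nat.find_le hAdbad
  have hm₀pos : 1 ≤ m₀ := by
    by_contra hc
    have h0 : m₀ = 0 := by omega
    have hspec := Nat.find_spec hex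
    rw [← hm₀, h0] at hspec
    exact hspec hA0
  refine ⟨A (m₀ - 1), ⟨?_, ?_⟩, ?_⟩
  · by_contra hbad
    exact Nat.find_min hex (by omega : m₀ - 1 < m₀) hbad
  · intro G' hG' hsub
    rcases parent_subset_of_subset hsub with heq | hpar
    · exact heq
    · exfalso
      have : czProp K 𝒥 (parent 1 (A (m₀ - 1))) := czProp_anti hK hG' hpar
      rw [← hAsucc, show m₀ - 1 + 1 = m₀ by omega] at this
      exact Nat.find_spec hex this
  · calc (A (m₀ - 1)).set ⊆ (A d).set := hAmono _ _ (by omega)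
      _ = J.set := by rw [hAd]

end DyadicInterval

lemma avg_le_hlMax (f : ℝ → ℂ) (y : ℝ) {R : ℝ} (hR : 0 < R) :
    (ENNReal.ofReal (2 * R))⁻¹ * ∫⁻ z in Set.Ioo (y - R) (y + R), (‖f z‖₊ : ℝ≥0∞) ≤
      hlMax f y :=
  le_iSup_of_le R (le_iSup_of_le hR le_rfl)

lemma lemA (f : ℝ → ℂ) {x y D r : ℝ} (hD : |x - y| ≤ D) (hr : 0 < r) :
    (ENNReal.ofReal (2 * r))⁻¹ * ∫⁻ z in Set.Ioo (x - r) (x + r), (‖f z‖₊ : ℝ≥0∞) ≤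
      ENNReal.ofReal ((D + r) / r) * hlMax f y := by
  have hD0 : 0 ≤ D := le_trans (abs_nonneg _) hD
  obtain ⟨hd1, hd2⟩ := abs_le.mp hD
  set R := D + r with hRdef
  have hR0 : 0 < R := by positivity
  have hsub : Set.Ioo (x - r) (x + r) ⊆ Set.Ioo (y - R) (y + R) := by
    intro z hz
    obtain ⟨hz1, hz2⟩ := hz
    constructor <;> [skip; skip] <;> simp only [hRdef] at * <;> linarith
  have hint := lintegral_mono_set (f := fun z => (‖f z‖₊ : ℝ≥0∞))
    (μ := volume) hsub
  have hco : (ENNReal.ofReal (2 * r))⁻¹ =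
      ENNReal.ofReal ((D + r) / r) * (ENNReal.ofReal (2 * R))⁻¹ := by
    rw [← ENNReal.ofReal_inv_of_pos (by linarith), ← ENNReal.ofReal_inv_of_pos (by linarith),
      ← ENNReal.ofReal_mul (by positivity)]
    congr 1
    field_simp
    ring
  rw [hco, mul_assoc]
  exact mul_le_mul_right (le_trans (mul_le_mul_right hint _) (avg_le_hlMax f y hR0)) _

lemma lemB (g : ℝ → ℂ) {a ℓ : ℝ} (hℓ : 0 < ℓ) :
    ∃ x ∈ Set.Ico a (a + ℓ),
      hlMax g x ≤ 5 * (∫⁻ z, (‖g z‖₊ : ℝ≥0∞)) / ENNReal.ofReal ℓ := by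
  classical
  set T := ∫⁻ z, (‖g z‖₊ : ℝ≥0∞) with hT
  have hsetle : ∀ (x r : ℝ), ∫⁻ z in Set.Ioo (x - r) (x + r), (‖g z‖₊ : ℝ≥0∞) ≤ T :=
    fun x r => setLIntegral_le_lintegral _ _
  have hmema : a ∈ Set.Ico a (a + ℓ) := ⟨le_refl _, by linarith⟩
  rcases eq_or_ne T 0 with h0 | h0
  · refine ⟨a, hmema, ?_⟩
    have hz : hlMax g a = 0 := by
      apply le_antisymm _ (zero_le)
      apply iSup₂_le
      intro r hr
      calc (ENNReal.ofReal (2*r))⁻¹ * ∫⁻ z in Set.Ioo (a - r) (a + r), (‖g z‖₊ : ℝ≥0∞)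
          ≤ (ENNReal.ofReal (2*r))⁻¹ * T := mul_le_mul_right (hsetle a r) _
        _ = 0 := by rw [h0, mul_zero]
    rw [hz]; exact zero_le
  rcases eq_or_ne T ⊤ with htop | htop
  · refine ⟨a, hmema, ?_⟩
    rw [htop]
    have he : (5:ℝ≥0∞) * ⊤ / ENNReal.ofReal ℓ = ⊤ := by
      rw [ENNReal.mul_top (by norm_num), ENNReal.top_div_of_ne_top ENNReal.ofReal_ne_top]
    rw [he]
    exact le_top
  · set lam := 5 * T / ENNReal.ofReal ℓ with hlam
    have hℓ0 : ENNReal.ofReal ℓ ≠ 0 := (ENNReal.ofReal_pos.mpr hℓ).ne'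
    have hℓtop : ENNReal.ofReal ℓ ≠ ⊤ := ENNReal.ofReal_ne_top
    have hlam0 : lam ≠ 0 := (ENNReal.div_pos (by simp [h0]) hℓtop).ne'
    have hlamtop : lam ≠ ⊤ := by
      rw [hlam]
      exact (ENNReal.div_lt_top (ENNReal.mul_ne_top (by norm_num) htop) hℓ0).ne
    by_contra hcon
    push_neg at hcon
    have hch : ∀ x ∈ Set.Ico a (a + ℓ), ∃ r, 0 < r ∧
        lam * ENNReal.ofReal (2 * r) < ∫⁻ z in Set.Ioo (x - r) (x + r), (‖g z‖₊ : ℝ≥0∞) := by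
      intro x hx
      have hx2 := hcon x hx
      rw [hlMax] at hx2
      obtain ⟨r, hr⟩ := lt_iSup_iff.mp hx2
      obtain ⟨hrpos, hlt⟩ := lt_iSup_iff.mp hr
      refine ⟨r, hrpos, ?_⟩
      have h2r0 : ENNReal.ofReal (2 * r) ≠ 0 := (ENNReal.ofReal_pos.mpr (by linarith)).ne'
      have hlt2 : lam < (∫⁻ z in Set.Ioo (x - r) (x + r), (‖g z‖₊ : ℝ≥0∞)) /
          ENNReal.ofReal (2 * r) := by
        rwa [ENNReal.div_eq_inv_mul]
      exact (ENNReal.lt_div_iff_mul_lt (Or.inl h2r0) (Or.inl ENNReal.ofReal_ne_top)).mp hlt2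
    choose! r hr0 hrint using hch
    set R₀ := (T / lam).toReal with hR₀
    have hTdlamtop : T / lam ≠ ⊤ := (ENNReal.div_lt_top htop hlam0).ne
    have hrle : ∀ x ∈ Set.Ico a (a + ℓ), r x ≤ R₀ := by
      intro x hx
      have h1 : lam * ENNReal.ofReal (2 * r x) ≤ T := le_trans (hrint x hx).le (hsetle _ _)
      have h2 : ENNReal.ofReal (2 * r x) ≤ T / lam :=
        (ENNReal.le_div_iff_mul_le (Or.inl hlam0) (Or.inl hlamtop)).mpr (by rwa [mul_comm])
      have h3 : 2 * r x ≤ R₀ := by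
        rw [hR₀]
        exact (ENNReal.ofReal_le_iff_le_toReal hTdlamtop).mp h2
      have := hr0 x hx
      linarith
    obtain ⟨u, hu_sub, hu_disj, hu_cov⟩ :=
      Vitali.exists_disjoint_subfamily_covering_enlargement_closedBall (Set.Ico a (a + ℓ))
        id r R₀ hrle 4 (by norm_num)
    have hu_r0 : ∀ b ∈ u, 0 < r b := fun b hb => hr0 b (hu_sub hb)
    have hdisjIoo : u.PairwiseDisjoint (fun b => Set.Ioo (b - r b) (b + r b)) := by
      apply hu_disj.mono
      intro b
      show Set.Ioo (b - r b) (b + r b) ⊆ Metric.closedBall (id b) (r b)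
      simp only [id_eq, Real.closedBall_eq_Icc]
      exact Set.Ioo_subset_Icc_self
    have hcount : u.Countable :=
      hdisjIoo.countable_of_isOpen (fun b _ => isOpen_Ioo)
        (fun b hb => Set.nonempty_Ioo.mpr (by have := hu_r0 b hb; simp only [id] at *; linarith))
    haveI := hcount.to_subtype
    have hcov2 : Set.Ico a (a + ℓ) ⊆ ⋃ b ∈ u, Metric.closedBall b (4 * r b) := by
      intro x hx
      obtain ⟨b, hb, hsubb⟩ := hu_cov x hx
      exact Set.mem_biUnion hb (hsubb (Metric.mem_closedBall_self (hr0 x hx).le))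
    have hvol1 : ENNReal.ofReal ℓ ≤ ∑' (b : u), 4 * ENNReal.ofReal (2 * r b) := by
      have e1 : ENNReal.ofReal ℓ = volume (Set.Ico a (a + ℓ)) := by
        rw [Real.volume_Ico]; congr 1; ring
      rw [e1]
      refine le_trans (measure_mono hcov2) (le_trans (measure_biUnion_le volume hcount _) ?_)
      apply ENNReal.tsum_le_tsum
      intro b
      rw [Real.volume_closedBall, show (2 * (4 * r b) : ℝ) = 4 * (2 * r b) by ring,
        ENNReal.ofReal_mul (by norm_num), ENNReal.ofReal_ofNat]
    have hdisj2 : Pairwise (Function.onFun Disjoint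
        (fun b : u => Set.Ioo ((b : ℝ) - r b) ((b : ℝ) + r b))) := by
      intro i j hij
      exact hdisjIoo i.2 j.2 (fun hh => hij (Subtype.ext hh))
    have hsum : ∑' (b : u), lam * ENNReal.ofReal (2 * r b) ≤ T := by
      calc ∑' (b : u), lam * ENNReal.ofReal (2 * r b)
          ≤ ∑' (b : u), ∫⁻ z in Set.Ioo ((b : ℝ) - r b) ((b : ℝ) + r b), (‖g z‖₊ : ℝ≥0∞) :=
            ENNReal.tsum_le_tsum (fun b => (hrint b (hu_sub b.2)).le)
        _ = ∫⁻ z in ⋃ (b : u), Set.Ioo ((b : ℝ) - r b) ((b : ℝ) + r b), (‖g z‖₊ : ℝ≥0∞) :=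
            (lintegral_iUnion (fun b => measurableSet_Ioo) hdisj2 _).symm
        _ ≤ T := setLIntegral_le_lintegral _ _
    have hfinal : 5 * T ≤ 4 * T := by
      calc 5 * T = lam * ENNReal.ofReal ℓ := by
            rw [hlam, ENNReal.div_mul_cancel hℓ0 hℓtop]
        _ ≤ lam * ∑' (b : u), 4 * ENNReal.ofReal (2 * r b) := mul_le_mul_right hvol1 _
        _ = 4 * ∑' (b : u), lam * ENNReal.ofReal (2 * r b) := by
            rw [ENNReal.tsum_mul_left, ENNReal.tsum_mul_left, ← mul_assoc, ← mul_assoc,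
              mul_comm lam 4]
        _ ≤ 4 * T := mul_le_mul_right hsum _
    have h54 : (5 : ℝ≥0∞) ≤ 4 := (ENNReal.mul_le_mul_iff_left h0 htop).mp hfinal
    norm_num at h54

lemma cz_bound {K : ℝ} (hK : 1 ≤ K) (h : ℝ → ℂ) (G : DyadicInterval) {J : DyadicInterval}
    (hJG : J.set ⊆ (DyadicInterval.parent 1 G).dilate (9 * K ^ 2)) {y : ℝ} (hy : y ∈ J.set) :
    ∃ x ∈ G.set, hlMax h x ≤ ENNReal.ofReal (200 * K ^ 2) * hlMax h y := by
  classical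
  have hK2 : (1:ℝ) ≤ K ^ 2 := by nlinarith
  have hℓ : 0 < G.len := G.len_pos
  set a := G.left with ha
  set ℓ := G.len with hℓdef
  set N := Set.Ioo (a - ℓ) (a + 2 * ℓ) with hN
  set g := N.indicator h with hg
  have hg_nn : ∀ z, (‖g z‖₊ : ℝ≥0∞) = N.indicator (fun z => (‖h z‖₊ : ℝ≥0∞)) z := by
    intro z
    by_cases hz : z ∈ N <;> simp [hg, Set.indicator_apply, hz]
  obtain ⟨x, hx, hxle⟩ := lemB g (a := a) hℓ
  have hxG : x ∈ G.set := hx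
  obtain ⟨hx1, hx2⟩ := hx
  -- geometry
  have hPsub := G.subset_parent_one
  obtain ⟨hP1, hP2⟩ := DyadicInterval.set_subset_iff.mp hPsub
  have hPlen : (DyadicInterval.parent 1 G).len = 2 * ℓ := G.parent_one_len
  rw [hPlen] at hP2
  have hyd := hJG hy
  obtain ⟨hy1, hy2⟩ := hyd
  rw [DyadicInterval.center, hPlen] at hy1 hy2
  set D := 10 * K ^ 2 * ℓ with hD
  have hxyD : |x - y| ≤ D := by
    rw [abs_le]
    constructor <;> · simp only [hD] at *; nlinarith
  have hD0 : 0 ≤ D := by positivity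
  -- control of the local mass
  set R' := D + 2 * ℓ with hR'
  have hR'0 : 0 < R' := by positivity
  have hNsub : N ⊆ Set.Ioo (y - R') (y + R') := by
    intro z hz
    obtain ⟨hz1, hz2⟩ := hz
    obtain ⟨hd1, hd2⟩ := abs_le.mp hxyD
    constructor <;> · simp only [hR'] at *; nlinarith
  have hT_eq : (∫⁻ z, (‖g z‖₊ : ℝ≥0∞)) = ∫⁻ z in N, (‖h z‖₊ : ℝ≥0∞) := by
    rw [show (fun z => (‖g z‖₊ : ℝ≥0∞)) = N.indicator (fun z => (‖h z‖₊ : ℝ≥0∞)) from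
      funext hg_nn]
    exact MeasureTheory.lintegral_indicator measurableSet_Ioo (fun z => (‖h z‖₊ : ℝ≥0∞))
  have h2R'0 : ENNReal.ofReal (2 * R') ≠ 0 := (ENNReal.ofReal_pos.mpr (by linarith)).ne'
  have hTN : (∫⁻ z, (‖g z‖₊ : ℝ≥0∞)) ≤ ENNReal.ofReal (2 * R') * hlMax h y := by
    rw [hT_eq]
    have h1 : (∫⁻ z in N, (‖h z‖₊ : ℝ≥0∞)) ≤
        ∫⁻ z in Set.Ioo (y - R') (y + R'), (‖h z‖₊ : ℝ≥0∞) :=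
      MeasureTheory.lintegral_mono_set hNsub
    have h2 := avg_le_hlMax h y hR'0
    calc (∫⁻ z in N, (‖h z‖₊ : ℝ≥0∞))
        ≤ ∫⁻ z in Set.Ioo (y - R') (y + R'), (‖h z‖₊ : ℝ≥0∞) := h1
      _ = ENNReal.ofReal (2 * R') * ((ENNReal.ofReal (2 * R'))⁻¹ *
            ∫⁻ z in Set.Ioo (y - R') (y + R'), (‖h z‖₊ : ℝ≥0∞)) := by
          rw [← mul_assoc, ENNReal.mul_inv_cancel h2R'0 ENNReal.ofReal_ne_top, one_mul]
      _ ≤ ENNReal.ofReal (2 * R') * hlMax h y := mul_le_mul_right h2 _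
  refine ⟨x, hxG, ?_⟩
  rw [hlMax]
  apply iSup₂_le
  intro rr hrr
  rcases le_or_gt rr ℓ with hsmall | hlarge
  · -- small radii: controlled by the localized maximal function at x
    have hIoosub : Set.Ioo (x - rr) (x + rr) ⊆ N := by
      intro z hz
      obtain ⟨hz1, hz2⟩ := hz
      constructor <;> · simp only [hN] at *; nlinarith
    have hcongr : (∫⁻ z in Set.Ioo (x - rr) (x + rr), (‖h z‖₊ : ℝ≥0∞)) =
        ∫⁻ z in Set.Ioo (x - rr) (x + rr), (‖g z‖₊ : ℝ≥0∞) := by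
      apply MeasureTheory.setLIntegral_congr_fun measurableSet_Ioo
      intro z hz
      beta_reduce
      rw [hg_nn z, Set.indicator_of_mem (hIoosub hz)]
    have step1 : (ENNReal.ofReal (2 * rr))⁻¹ *
        (∫⁻ z in Set.Ioo (x - rr) (x + rr), (‖h z‖₊ : ℝ≥0∞)) ≤
        5 * (∫⁻ z, (‖g z‖₊ : ℝ≥0∞)) / ENNReal.ofReal ℓ := by
      rw [hcongr]
      exact le_trans (avg_le_hlMax g x hrr) hxle
    have hscal : 5 * ENNReal.ofReal (2 * R') / ENNReal.ofReal ℓ ≤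
        ENNReal.ofReal (200 * K ^ 2) := by
      have h5 : (5 : ℝ≥0∞) = ENNReal.ofReal 5 := by norm_num
      rw [h5, ← ENNReal.ofReal_mul (by norm_num), ← ENNReal.ofReal_div_of_pos hℓ]
      apply ENNReal.ofReal_le_ofReal
      rw [div_le_iff₀ hℓ]
      simp only [hR', hD]
      nlinarith
    calc (ENNReal.ofReal (2 * rr))⁻¹ *
        (∫⁻ z in Set.Ioo (x - rr) (x + rr), (‖h z‖₊ : ℝ≥0∞))
        ≤ 5 * (∫⁻ z, (‖g z‖₊ : ℝ≥0∞)) / ENNReal.ofReal ℓ := step1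
      _ ≤ 5 * (ENNReal.ofReal (2 * R') * hlMax h y) / ENNReal.ofReal ℓ :=
          ENNReal.div_le_div_right (mul_le_mul_right hTN _) _
      _ = (5 * ENNReal.ofReal (2 * R') / ENNReal.ofReal ℓ) * hlMax h y := by
          rw [div_eq_mul_inv, div_eq_mul_inv]; ring
      _ ≤ ENNReal.ofReal (200 * K ^ 2) * hlMax h y := mul_le_mul_left hscal _
  · -- large radii: pointwise doubling
    have step := lemA h (D := D) hxyD hrr
    have hfac : ENNReal.ofReal ((D + rr) / rr) ≤ ENNReal.ofReal (200 * K ^ 2) := by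
      apply ENNReal.ofReal_le_ofReal
      rw [div_le_iff₀ (by linarith : (0:ℝ) < rr)]
      simp only [hD]
      nlinarith
    exact le_trans step (mul_le_mul_left hfac _)

/-- comparability of stopping data across CZ intervals:
`sup_{J∈𝒥} inf_J M h ≲ sup_{G∈CZ_K(𝒥)} inf_G M h ≲ K² sup_{J∈𝒥} inf_J M h`. -/
theorem stmt17 :
    ∃ C₁ C₂ : ℝ, 0 < C₁ ∧ 0 < C₂ ∧
      ∀ K : ℝ, 1 ≤ K → ∀ 𝒥 : Finset DyadicInterval, 𝒥.Nonempty →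
      ∀ h : ℝ → ℂ, Nice h →
        ((⨆ J ∈ 𝒥, ⨅ x ∈ DyadicInterval.set J, hlMax h x) ≤
            ENNReal.ofReal C₁ * ⨆ G ∈ CZ K 𝒥, ⨅ x ∈ DyadicInterval.set G, hlMax h x) ∧
        ((⨆ G ∈ CZ K 𝒥, ⨅ x ∈ DyadicInterval.set G, hlMax h x) ≤
            ENNReal.ofReal (C₂ * K ^ 2) *
              ⨆ J ∈ 𝒥, ⨅ x ∈ DyadicInterval.set J, hlMax h x) := by
  refine ⟨1, 200, by norm_num, by norm_num, ?_⟩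
  intro K hK 𝒥 h𝒥 h _
  constructor
  · -- left inequality
    rw [ENNReal.ofReal_one, one_mul]
    apply iSup₂_le
    intro J hJ
    obtain ⟨G, hG, hGJ⟩ := DyadicInterval.exists_cz_subset hK h𝒥 hJ
    calc (⨅ x ∈ DyadicInterval.set J, hlMax h x)
        ≤ ⨅ x ∈ DyadicInterval.set G, hlMax h x :=
          le_iInf₂ fun x hx => iInf₂_le x (hGJ hx)
      _ ≤ ⨆ G ∈ CZ K 𝒥, ⨅ x ∈ DyadicInterval.set G, hlMax h x := le_iSup₂ (f := fun G (_ : G ∈ CZ K 𝒥) => ⨅ x ∈ DyadicInterval.set G, hlMax h x) G hG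
  · -- right inequality
    set c := ENNReal.ofReal (200 * K ^ 2) with hc
    have hc0 : c ≠ 0 := (ENNReal.ofReal_pos.mpr (by nlinarith)).ne'
    have hctop : c ≠ ⊤ := ENNReal.ofReal_ne_top
    apply iSup₂_le
    intro G hG
    have hpar : ¬ czProp K 𝒥 (DyadicInterval.parent 1 G) := by
      intro hp
      exact G.parent_one_ne (hG.2 _ hp G.subset_parent_one)
    simp only [czProp, not_forall, not_not] at hpar
    obtain ⟨J, hJ𝒥, hJsub⟩ := hpar
    have key : ∀ y ∈ J.set, (⨅ x ∈ DyadicInterval.set G, hlMax h x) ≤ c * hlMax h y := by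
      intro y hy
      obtain ⟨x, hx, hxb⟩ := cz_bound hK h G hJsub hy
      exact le_trans (iInf₂_le x hx) hxb
    have hdiv : (⨅ x ∈ DyadicInterval.set G, hlMax h x) / c ≤
        ⨅ y ∈ DyadicInterval.set J, hlMax h y := by
      apply le_iInf₂
      intro y hy
      rw [ENNReal.div_le_iff_le_mul (Or.inl hc0) (Or.inl hctop)]
      rw [mul_comm]
      exact key y hy
    calc (⨅ x ∈ DyadicInterval.set G, hlMax h x)
        = c * ((⨅ x ∈ DyadicInterval.set G, hlMax h x) / c) :=
          (ENNReal.mul_div_cancel hc0 hctop).symm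
      _ ≤ c * ⨅ y ∈ DyadicInterval.set J, hlMax h y := mul_le_mul_right hdiv _
      _ ≤ c * ⨆ J ∈ 𝒥, ⨅ x ∈ DyadicInterval.set J, hlMax h x :=
          mul_le_mul_right (le_iSup₂ (f := fun J (_ : J ∈ 𝒥) => ⨅ x ∈ DyadicInterval.set J, hlMax h x) J hJ𝒥) _
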